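/- Let T be a left-continuous t-norm, I its residual implicator, μ_l and μ_u monotone measures on a finite nonempty set X, and R a T-equivalence relation on X. For every fuzzy set A on X, the Sugeno lower approximation L(y) = ⨍ I(R(x,y), A(x)) dμ_l(x) and the Sugeno upper approximation U(y) = ⨍ T(R(x,y), A(x)) dμ_u(x) are both granularly representable fuzzy sets. -/
import Mathlib


structure IsTNorm (T : ℝ → ℝ → ℝ) : Prop where
  maps_to : ∀ x ∈ Set.Icc (0:ℝ) 1, ∀ y ∈ Set.Icc (0:ℝ) 1, T x y ∈ Set.Icc (0:ℝ) 1
  comm : ∀ x ∈ Set.Icc (0:ℝ) 1, ∀ y ∈ Set.Icc (0:ℝ) 1, T x y = T y x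
  assoc : ∀ x ∈ Set.Icc (0:ℝ) 1, ∀ y ∈ Set.Icc (0:ℝ) 1, ∀ z ∈ Set.Icc (0:ℝ) 1,
      T (T x y) z = T x (T y z)
  mono : ∀ x₁ ∈ Set.Icc (0:ℝ) 1, ∀ x₂ ∈ Set.Icc (0:ℝ) 1, ∀ y₁ ∈ Set.Icc (0:ℝ) 1,
      ∀ y₂ ∈ Set.Icc (0:ℝ) 1, x₁ ≤ x₂ → y₁ ≤ y₂ → T x₁ y₁ ≤ T x₂ y₂
  one_left : ∀ x ∈ Set.Icc (0:ℝ) 1, T 1 x = x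

/-- `T` is left-continuous: it commutes with suprema of nonempty subsets of `[0,1]`
in each (equivalently, by commutativity, the second) argument. -/
def LeftContinuousTNorm (T : ℝ → ℝ → ℝ) : Prop :=
  ∀ x ∈ Set.Icc (0:ℝ) 1, ∀ S : Set ℝ, S.Nonempty → S ⊆ Set.Icc (0:ℝ) 1 →
    T x (sSup S) = sSup (T x '' S)

/-- The residual implicator of `T`: `I(x,y) = sup {λ ∈ [0,1] | T(x,λ) ≤ y}`. -/
noncomputable def resid (T : ℝ → ℝ → ℝ) (x y : ℝ) : ℝ :=
  sSup {l | l ∈ Set.Icc (0:ℝ) 1 ∧ T x l ≤ y}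

/-- `R` is a `T`-equivalence relation: a `[0,1]`-valued reflexive, symmetric and
`T`-transitive fuzzy relation. -/
structure IsTEquiv {X : Type*} (T : ℝ → ℝ → ℝ) (R : X → X → ℝ) : Prop where
  mem : ∀ x y, R x y ∈ Set.Icc (0:ℝ) 1
  refl : ∀ x, R x x = 1
  symm : ∀ x y, R x y = R y x
  trans : ∀ x y z, T (R x y) (R y z) ≤ R x z

/-- A monotone measure on a finite set `X`. -/
structure IsMonotoneMeasure {X : Type*} (μ : Set X → ℝ) : Prop where
  empty : μ ∅ = 0
  univ : μ Set.univ = 1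
  mono : ∀ E F : Set X, E ⊆ F → μ E ≤ μ F

/-- The Sugeno integral of `f : X → ℝ` w.r.t. `μ` on the finite nonempty set `X`:
`max_i min(μ(A*_i), f(x*_i))` where `x*` enumerates `X` with
`f(x*_1) ≤ … ≤ f(x*_n)` and `A*_i = {x*_i, …, x*_n}`. -/
noncomputable def sugeno {X : Type*} [Fintype X] [Nonempty X] (μ : Set X → ℝ) (f : X → ℝ) : ℝ :=
  let e : Fin (Fintype.card X) ≃ X := (Fintype.equivFin X).symm
  let σ : Equiv.Perm (Fin (Fintype.card X)) := Tuple.sort (f ∘ e)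
  haveI : Nonempty (Fin (Fintype.card X)) := Fin.pos_iff_nonempty.mp Fintype.card_pos
  Finset.univ.sup' Finset.univ_nonempty
    (fun i => min (μ {x | ∃ j, i ≤ j ∧ e (σ j) = x}) (f (e (σ i))))

/-- `A` is granularly representable w.r.t. `T` and `R`: for every `y`,
`A(y)` is the supremum of the values `T(λ, R(x,y))` over all granules
`R_λ(x) = (z ↦ T(λ, R(x,z)))` that are (pointwise) contained in `A`. -/
def GranRep {X : Type*} (T : ℝ → ℝ → ℝ) (R : X → X → ℝ) (A : X → ℝ) : Prop :=
  ∀ y, A y = sSup {v | ∃ l ∈ Set.Icc (0:ℝ) 1, ∃ x, (∀ z, T l (R x z) ≤ A z) ∧ v = T l (R x y)}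


section Aux
variable {T : ℝ → ℝ → ℝ}

lemma T_one_right (hT : IsTNorm T) {x : ℝ} (hx : x ∈ Set.Icc (0:ℝ) 1) : T x 1 = x := by
  rw [hT.comm x hx 1 (by norm_num), hT.one_left x hx]

lemma T_le_left' (hT : IsTNorm T) {x y : ℝ} (hx : x ∈ Set.Icc (0:ℝ) 1)
    (hy : y ∈ Set.Icc (0:ℝ) 1) : T x y ≤ x := by
  have := hT.mono x hx x hx y hy 1 (by norm_num) le_rfl hy.2
  rwa [T_one_right hT hx] at this

lemma T_zero_right (hT : IsTNorm T) {x : ℝ} (hx : x ∈ Set.Icc (0:ℝ) 1) : T x 0 = 0 := by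
  have h1 := (hT.maps_to x hx 0 (by norm_num)).1
  have h2 : T 0 x ≤ 0 := T_le_left' hT (by norm_num) hx
  rw [hT.comm x hx 0 (by norm_num)]
  rw [hT.comm x hx 0 (by norm_num)] at h1
  linarith

lemma resid_mem (hT : IsTNorm T) {a b : ℝ} (ha : a ∈ Set.Icc (0:ℝ) 1) (hb : 0 ≤ b) :
    resid T a b ∈ Set.Icc (0:ℝ) 1 := by
  have h0 : (0:ℝ) ∈ {l | l ∈ Set.Icc (0:ℝ) 1 ∧ T a l ≤ b} :=
    ⟨by norm_num, by rw [T_zero_right hT ha]; exact hb⟩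
  exact ⟨le_csSup ⟨1, fun l hl => hl.1.2⟩ h0, csSup_le ⟨0, h0⟩ fun l hl => hl.1.2⟩

lemma T_resid_le (hT : IsTNorm T) (hTlc : LeftContinuousTNorm T) {a b : ℝ}
    (ha : a ∈ Set.Icc (0:ℝ) 1) (hb : 0 ≤ b) : T a (resid T a b) ≤ b := by
  have h0 : (0:ℝ) ∈ {l | l ∈ Set.Icc (0:ℝ) 1 ∧ T a l ≤ b} :=
    ⟨by norm_num, by rw [T_zero_right hT ha]; exact hb⟩
  rw [resid, hTlc a ha _ ⟨0, h0⟩ (fun l hl => hl.1)]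
  exact csSup_le (Set.Nonempty.image _ ⟨0, h0⟩) (by rintro v ⟨l, hl, rfl⟩; exact hl.2)

lemma le_resid (hT : IsTNorm T) {a b l : ℝ} (hl : l ∈ Set.Icc (0:ℝ) 1) (h : T a l ≤ b) :
    l ≤ resid T a b :=
  le_csSup ⟨1, fun m hm => hm.1.2⟩ ⟨hl, h⟩

end Aux

lemma sugeno_attained {X : Type*} [Fintype X] [Nonempty X] (μ : Set X → ℝ) (f : X → ℝ) :
    ∃ (E : Set X) (x0 : X), x0 ∈ E ∧ sugeno μ f = min (μ E) (f x0) ∧ ∀ x ∈ E, f x0 ≤ f x := by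
  haveI : Nonempty (Fin (Fintype.card X)) := Fin.pos_iff_nonempty.mp Fintype.card_pos
  set e : Fin (Fintype.card X) ≃ X := (Fintype.equivFin X).symm with he
  set σ : Equiv.Perm (Fin (Fintype.card X)) := Tuple.sort (f ∘ e) with hσ
  obtain ⟨i, -, hi⟩ := Finset.exists_mem_eq_sup' (Finset.univ_nonempty (α := Fin (Fintype.card X)))
    (fun i => min (μ {x | ∃ j, i ≤ j ∧ e (σ j) = x}) (f (e (σ i))))
  refine ⟨{x | ∃ j, i ≤ j ∧ e (σ j) = x}, e (σ i), ⟨i, le_rfl, rfl⟩, hi, ?_⟩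
  rintro x ⟨j, hij, rfl⟩
  exact Tuple.monotone_sort (f ∘ e) hij

lemma sugeno_lower {X : Type*} [Fintype X] [Nonempty X] {μ : Set X → ℝ}
    (hμ : IsMonotoneMeasure μ) (f : X → ℝ) {E : Set X} {c : ℝ} (hne : E.Nonempty)
    (h : ∀ x ∈ E, c ≤ f x) : min (μ E) c ≤ sugeno μ f := by
  classical
  haveI : Nonempty (Fin (Fintype.card X)) := Fin.pos_iff_nonempty.mp Fintype.card_pos
  set e : Fin (Fintype.card X) ≃ X := (Fintype.equivFin X).symm with he
  set σ : Equiv.Perm (Fin (Fintype.card X)) := Tuple.sort (f ∘ e) with hσ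
  set F : Finset (Fin (Fintype.card X)) := Finset.univ.filter (fun i => e (σ i) ∈ E) with hF
  have hFne : F.Nonempty := by
    obtain ⟨x, hx⟩ := hne
    refine ⟨σ.symm (e.symm x), ?_⟩
    simp [hF, hx]
  set i0 := F.min' hFne with hi0
  have hi0mem : e (σ i0) ∈ E := by
    have := F.min'_mem hFne
    simpa [hF] using this
  have hsub : E ⊆ {x | ∃ j, i0 ≤ j ∧ e (σ j) = x} := by
    intro x hx
    refine ⟨σ.symm (e.symm x), F.min'_le _ (by simp [hF, hx]), by simp⟩
  have hterm : min (μ E) c ≤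
      min (μ {x | ∃ j, i0 ≤ j ∧ e (σ j) = x}) (f (e (σ i0))) :=
    min_le_min (hμ.mono _ _ hsub) (h _ hi0mem)
  have hs : (Finset.univ.sup' Finset.univ_nonempty
      (fun i => min (μ {x | ∃ j, i ≤ j ∧ e (σ j) = x}) (f (e (σ i))))) = sugeno μ f := rfl
  rw [← hs]
  exact hterm.trans (Finset.le_sup'
    (fun i => min (μ {x | ∃ j, i ≤ j ∧ e (σ j) = x}) (f (e (σ i)))) (Finset.mem_univ i0))

lemma sugeno_mem {X : Type*} [Fintype X] [Nonempty X] {μ : Set X → ℝ}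
    (hμ : IsMonotoneMeasure μ) {f : X → ℝ} (hf : ∀ x, f x ∈ Set.Icc (0:ℝ) 1) :
    sugeno μ f ∈ Set.Icc (0:ℝ) 1 := by
  obtain ⟨E, x0, hx0, hEq, -⟩ := sugeno_attained μ f
  constructor
  · rw [hEq]
    exact le_min (by rw [← hμ.empty]; exact hμ.mono _ _ (Set.empty_subset E)) (hf x0).1
  · rw [hEq]
    exact (min_le_right _ _).trans (hf x0).2


/-- the Sugeno lower and upper approximations are granularly representable. -/
theorem stmt12 {X : Type*} [Fintype X] [Nonempty X]
    (T : ℝ → ℝ → ℝ) (hT : IsTNorm T) (hTlc : LeftContinuousTNorm T)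
    (μl μu : Set X → ℝ) (hμl : IsMonotoneMeasure μl) (hμu : IsMonotoneMeasure μu)
    (R : X → X → ℝ) (hR : IsTEquiv T R)
    (A : X → ℝ) (hA : ∀ x, A x ∈ Set.Icc (0:ℝ) 1) :
    GranRep T R (fun y => sugeno μl (fun x => resid T (R x y) (A x))) ∧
    GranRep T R (fun y => sugeno μu (fun x => T (R x y) (A x))) := by
    classical
  have Tm := hT.maps_to
  -- extensionality transfer lemma
  have sugeno_ext : ∀ (μ : Set X → ℝ), IsMonotoneMeasure μ → ∀ (f g : X → ℝ),
      (∀ x, f x ∈ Set.Icc (0:ℝ) 1) → (∀ x, 0 ≤ g x) → ∀ r ∈ Set.Icc (0:ℝ) 1,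
      (∀ x, T (f x) r ≤ g x) → T (sugeno μ f) r ≤ sugeno μ g := by
    intro μ hμ f g hf hg r hr h
    obtain ⟨E, x0, hx0, hEq, hmin⟩ := sugeno_attained μ f
    have hμE : μ E ∈ Set.Icc (0:ℝ) 1 :=
      ⟨by rw [← hμ.empty]; exact hμ.mono _ _ (Set.empty_subset E),
       by rw [← hμ.univ]; exact hμ.mono _ _ (Set.subset_univ E)⟩
    have hmem : min (μ E) (f x0) ∈ Set.Icc (0:ℝ) 1 :=
      ⟨le_min hμE.1 (hf x0).1, (min_le_right _ _).trans (hf x0).2⟩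
    rw [hEq]
    have key : ∀ x ∈ E, T (f x0) r ≤ g x := fun x hx =>
      (hT.mono _ (hf x0) _ (hf x) r hr r hr (hmin x hx) le_rfl).trans (h x)
    have h1 : T (min (μ E) (f x0)) r ≤ min (μ E) (T (f x0) r) :=
      le_min ((T_le_left' hT hmem hr).trans (min_le_left _ _))
        (hT.mono _ hmem _ (hf x0) r hr r hr (min_le_right _ _) le_rfl)
    exact h1.trans (sugeno_lower hμ g ⟨x0, hx0⟩ key)
  -- granular representability from extensionality
  have gran : ∀ B : X → ℝ, (∀ y, B y ∈ Set.Icc (0:ℝ) 1) →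
      (∀ x z, T (B x) (R x z) ≤ B z) → GranRep T R B := by
    intro B hB hext y
    have hmem : B y ∈ {v | ∃ l ∈ Set.Icc (0:ℝ) 1, ∃ x,
        (∀ z, T l (R x z) ≤ B z) ∧ v = T l (R x y)} :=
      ⟨B y, hB y, y, fun z => hext y z, by rw [hR.refl y, T_one_right hT (hB y)]⟩
    have hub : ∀ v ∈ {v | ∃ l ∈ Set.Icc (0:ℝ) 1, ∃ x,
        (∀ z, T l (R x z) ≤ B z) ∧ v = T l (R x y)}, v ≤ B y := by
      rintro v ⟨l, hl, x, hx, rfl⟩; exact hx y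
    exact le_antisymm (le_csSup ⟨B y, hub⟩ hmem) (csSup_le ⟨_, hmem⟩ hub)
  constructor
  · -- lower approximation
    refine gran _ (fun y => sugeno_mem hμl (fun x => resid_mem hT (hR.mem x y) (hA x).1)) ?_
    intro y z
    refine sugeno_ext μl hμl _ _ (fun x => resid_mem hT (hR.mem x y) (hA x).1)
      (fun x => (resid_mem hT (hR.mem x z) (hA x).1).1) _ (hR.mem y z) ?_
    intro x
    set l := resid T (R x y) (A x) with hl
    have hlm : l ∈ Set.Icc (0:ℝ) 1 := resid_mem hT (hR.mem x y) (hA x).1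
    refine le_resid hT (Tm _ hlm _ (hR.mem y z)) ?_
    calc T (R x z) (T l (R y z))
        = T (R x z) (T (R y z) l) := by rw [hT.comm l hlm _ (hR.mem y z)]
      _ = T (T (R x z) (R y z)) l := (hT.assoc _ (hR.mem x z) _ (hR.mem y z) l hlm).symm
      _ ≤ T (R x y) l := by
          refine hT.mono _ (Tm _ (hR.mem x z) _ (hR.mem y z)) _ (hR.mem x y) l hlm l hlm ?_ le_rfl
          have := hR.trans x z y
          rwa [hR.symm z y] at this
      _ ≤ A x := T_resid_le hT hTlc (hR.mem x y) (hA x).1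
  · -- upper approximation
    refine gran _ (fun y => sugeno_mem hμu (fun x => Tm _ (hR.mem x y) _ (hA x))) ?_
    intro y z
    refine sugeno_ext μu hμu _ _ (fun x => Tm _ (hR.mem x y) _ (hA x))
      (fun x => (Tm _ (hR.mem x z) _ (hA x)).1) _ (hR.mem y z) ?_
    intro x
    calc T (T (R x y) (A x)) (R y z)
        = T (T (A x) (R x y)) (R y z) := by rw [hT.comm _ (hR.mem x y) _ (hA x)]
      _ = T (A x) (T (R x y) (R y z)) := hT.assoc _ (hA x) _ (hR.mem x y) _ (hR.mem y z)
      _ ≤ T (A x) (R x z) := hT.mono _ (hA x) _ (hA x) _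
          (Tm _ (hR.mem x y) _ (hR.mem y z)) _ (hR.mem x z) le_rfl (hR.trans x y z)
      _ = T (R x z) (A x) := hT.comm _ (hA x) _ (hR.mem x z)
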